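/- In the single-letter minimization min I(X;A) + I(X;U|Y,A) over finite alphabets 𝒰, conditional pmfs P_{U|X} and deterministic functions η : 𝒰 → 𝒜 subject to E[d(X, X̂^opt(U,Y))] ≤ D and E[Δ(A)] ≤ C, the minimum value is unchanged if the auxiliary alphabet 𝒰 is restricted to satisfy |𝒰| ≤ |𝒳||𝒜| + 2. -/

import Mathlib

open Finset

noncomputable section

/-- A probability mass function on a finite alphabet. -/
def IsPMF {α : Type} [Fintype α] (p : α → ℝ) : Prop :=
  (∀ a, 0 ≤ p a) ∧ ∑ a, p a = 1

/-- A conditional probability mass function. -/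
def IsCondPMF {α β : Type} [Fintype α] [Fintype β] (p : α → β → ℝ) : Prop :=
  ∀ a, IsPMF (p a)

/-- A Shannon strategy: an estimate function `Y → Xh` together with an action in `A`. -/
abbrev Strat (Y Xh A : Type) : Type := (Y → Xh) × A

variable {X Y A Xh : Type} [Fintype X] [Fintype Y] [Fintype A] [Fintype Xh]
  [DecidableEq X] [DecidableEq Y] [DecidableEq A] [DecidableEq Xh]

/-- Joint pmf `P_{X,Y,U}(x,y,u) = P_X(x) P_{U|X}(u|x) P_{Y|X,A}(y|x,η(u))`
for an auxiliary alphabet `Fin n`. -/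
def pUJoint (PX : X → ℝ) (PW : A → X → Y → ℝ) {n : ℕ} (PU : X → Fin n → ℝ)
    (η : Fin n → A) (x : X) (y : Y) (u : Fin n) : ℝ :=
  PX x * PU x u * PW (η u) x y

def pAu (PX : X → ℝ) {n : ℕ} (PU : X → Fin n → ℝ) (η : Fin n → A) (a : A) : ℝ :=
  ∑ x, ∑ u, if η u = a then PX x * PU x u else 0

def pXAu (PX : X → ℝ) {n : ℕ} (PU : X → Fin n → ℝ) (η : Fin n → A) (x : X) (a : A) : ℝ :=
  ∑ u, if η u = a then PX x * PU x u else 0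

def pYAu (PX : X → ℝ) (PW : A → X → Y → ℝ) {n : ℕ} (PU : X → Fin n → ℝ)
    (η : Fin n → A) (y : Y) (a : A) : ℝ :=
  ∑ x, ∑ u, if η u = a then pUJoint PX PW PU η x y u else 0

def pXYAu (PX : X → ℝ) (PW : A → X → Y → ℝ) {n : ℕ} (PU : X → Fin n → ℝ)
    (η : Fin n → A) (x : X) (y : Y) (a : A) : ℝ :=
  ∑ u, if η u = a then pUJoint PX PW PU η x y u else 0

def pYUu (PX : X → ℝ) (PW : A → X → Y → ℝ) {n : ℕ} (PU : X → Fin n → ℝ)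
    (η : Fin n → A) (y : Y) (u : Fin n) : ℝ :=
  ∑ x, pUJoint PX PW PU η x y u

/-- Mutual information `I(X;A)` with `A = η(U)` (base-2 logarithms). -/
def IXAu (PX : X → ℝ) {n : ℕ} (PU : X → Fin n → ℝ) (η : Fin n → A) : ℝ :=
  ∑ x, ∑ a, pXAu PX PU η x a * Real.logb 2 (pXAu PX PU η x a / (PX x * pAu PX PU η a))

/-- Conditional mutual information `I(X;U|Y,A)` with `A = η(U)` (base-2 logarithms). -/
def IXUcondYAu (PX : X → ℝ) (PW : A → X → Y → ℝ) {n : ℕ} (PU : X → Fin n → ℝ)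
    (η : Fin n → A) : ℝ :=
  ∑ x, ∑ y, ∑ u, pUJoint PX PW PU η x y u *
    Real.logb 2 (pUJoint PX PW PU η x y u * pYAu PX PW PU η y (η u) /
      (pXYAu PX PW PU η x y (η u) * pYUu PX PW PU η y u))

/-- Average distortion `E[d(X, X̂ᵒᵖᵗ(U,Y))]` with the optimal estimator
`X̂ᵒᵖᵗ(u,y) = argmin_{xh} E[d(X,xh)|U=u,Y=y]`, written as
`∑_{y,u} min_{xh} ∑_x P(x,y,u) d(x,xh)`. -/
def expDistU [Nonempty Xh] (PX : X → ℝ) (PW : A → X → Y → ℝ) (dist : X → Xh → ℝ)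
    {n : ℕ} (PU : X → Fin n → ℝ) (η : Fin n → A) : ℝ :=
  ∑ y, ∑ u, Finset.univ.inf' Finset.univ_nonempty
    (fun xh : Xh => ∑ x, pUJoint PX PW PU η x y u * dist x xh)

/-- Average action cost `E[Δ(η(U))]`. -/
def expCostU (PX : X → ℝ) (cost : A → ℝ) {n : ℕ} (PU : X → Fin n → ℝ)
    (η : Fin n → A) : ℝ :=
  ∑ x, ∑ u, PX x * PU x u * cost (η u)

/-- The single-letter minimization `min I(X;A) + I(X;U|Y,A)` over all finite auxiliary
alphabets (represented as `Fin n`), conditional pmfs `P_{U|X}` and functions `η : U → A`,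
subject to the distortion and cost constraints. -/
def RDCU [Nonempty Xh] (PX : X → ℝ) (PW : A → X → Y → ℝ) (dist : X → Xh → ℝ)
    (cost : A → ℝ) (D C : ℝ) : ℝ :=
  sInf { r : ℝ | ∃ n : ℕ, ∃ PU : X → Fin n → ℝ, ∃ η : Fin n → A, IsCondPMF PU ∧
    expDistU PX PW dist PU η ≤ D ∧ expCostU PX cost PU η ≤ C ∧
    r = IXAu PX PU η + IXUcondYAu PX PW PU η }

/-- The same single-letter minimization with the auxiliary-alphabet cardinality
restricted as `|U| ≤ |X||A| + 2`. -/
def RDCUbdd [Nonempty Xh] (PX : X → ℝ) (PW : A → X → Y → ℝ) (dist : X → Xh → ℝ)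
    (cost : A → ℝ) (D C : ℝ) : ℝ :=
  sInf { r : ℝ | ∃ n : ℕ, n ≤ Fintype.card X * Fintype.card A + 2 ∧
    ∃ PU : X → Fin n → ℝ, ∃ η : Fin n → A, IsCondPMF PU ∧
    expDistU PX PW dist PU η ≤ D ∧ expCostU PX cost PU η ≤ C ∧
    r = IXAu PX PU η + IXUcondYAu PX PW PU η }
/-! ### Auxiliary machinery for the cardinality bound -/

set_option linter.unusedSectionVars false
section AuxCardBound

variable (PX : X → ℝ) (PW : A → X → Y → ℝ)

/-- Conditional pmf `P_{U|X}` built from weights `ν` on `U = Fin m` and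
reverse conditionals `Q u = P_{X|U=u}`. -/
def sysPU {m : ℕ} (ν : Fin m → ℝ) (Q : Fin m → X → ℝ) : X → Fin m → ℝ :=
  fun x u => ν u * Q u x / PX x

/-- The joint pmf of `(X, A)` induced by a system. -/
def sysM {m : ℕ} (ν : Fin m → ℝ) (Q : Fin m → X → ℝ) (ζ : Fin m → A) (x : X) (a : A) : ℝ :=
  ∑ u, if ζ u = a then ν u * Q u x else 0

/-- `I(X;A)` as a function of the joint `(X,A)` pmf. -/
def IofM (M : X → A → ℝ) : ℝ :=
  ∑ x, ∑ a, M x a * Real.logb 2 (M x a / (PX x * ∑ x', M x' a))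

/-- The per-`u` contribution to `I(X;U|Y,A)`. -/
def GofM (M : X → A → ℝ) (Qu : X → ℝ) (a : A) : ℝ :=
  ∑ x, ∑ y, Qu x * PW a x y *
    Real.logb 2 (Qu x * PW a x y * (∑ x', PW a x' y * M x' a) /
      (PW a x y * M x a * ∑ x', Qu x' * PW a x' y))

/-- The per-`u` contribution to the distortion. -/
def DofQ [Nonempty Xh] (dist : X → Xh → ℝ) (Qu : X → ℝ) (a : A) : ℝ :=
  ∑ y, Finset.univ.inf' Finset.univ_nonempty
    (fun xh : Xh => ∑ x, Qu x * PW a x y * dist x xh)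

variable {PX PW}

lemma sysPU_pUJoint (hPX : ∀ x, PX x ≠ 0) {m : ℕ} (ν : Fin m → ℝ) (Q : Fin m → X → ℝ)
    (ζ : Fin m → A) (x : X) (y : Y) (u : Fin m) :
    pUJoint PX PW (sysPU PX ν Q) ζ x y u = ν u * (Q u x * PW (ζ u) x y) := by
  unfold pUJoint sysPU
  have h : PX x ≠ 0 := hPX x
  field_simp

lemma sysPU_pXAu (hPX : ∀ x, PX x ≠ 0) {m : ℕ} (ν : Fin m → ℝ) (Q : Fin m → X → ℝ)
    (ζ : Fin m → A) (x : X) (a : A) :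
    pXAu PX (sysPU PX ν Q) ζ x a = sysM ν Q ζ x a := by
  unfold pXAu sysM sysPU
  refine Finset.sum_congr rfl fun u _ => ?_
  have hx : PX x ≠ 0 := hPX x
  by_cases h : ζ u = a
  · simp only [h, if_true, sysPU]
    field_simp
  · simp [h]

lemma sysPU_pAu (hPX : ∀ x, PX x ≠ 0) {m : ℕ} (ν : Fin m → ℝ) (Q : Fin m → X → ℝ)
    (ζ : Fin m → A) (a : A) :
    pAu PX (sysPU PX ν Q) ζ a = ∑ x, sysM ν Q ζ x a := by
  unfold pAu
  refine Finset.sum_congr rfl fun x _ => ?_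
  exact sysPU_pXAu hPX ν Q ζ x a

lemma sysPU_pXYAu (hPX : ∀ x, PX x ≠ 0) {m : ℕ} (ν : Fin m → ℝ) (Q : Fin m → X → ℝ)
    (ζ : Fin m → A) (x : X) (y : Y) (a : A) :
    pXYAu PX PW (sysPU PX ν Q) ζ x y a = PW a x y * sysM ν Q ζ x a := by
  unfold pXYAu sysM
  rw [Finset.mul_sum]
  refine Finset.sum_congr rfl fun u _ => ?_
  by_cases h : ζ u = a
  · rw [if_pos h, if_pos h, sysPU_pUJoint hPX, h]
    ring
  · simp [h]

lemma sysPU_pYAu (hPX : ∀ x, PX x ≠ 0) {m : ℕ} (ν : Fin m → ℝ) (Q : Fin m → X → ℝ)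
    (ζ : Fin m → A) (y : Y) (a : A) :
    pYAu PX PW (sysPU PX ν Q) ζ y a = ∑ x, PW a x y * sysM ν Q ζ x a := by
  unfold pYAu
  exact Finset.sum_congr rfl fun x _ => sysPU_pXYAu hPX ν Q ζ x y a

lemma sysPU_pYUu (hPX : ∀ x, PX x ≠ 0) {m : ℕ} (ν : Fin m → ℝ) (Q : Fin m → X → ℝ)
    (ζ : Fin m → A) (y : Y) (u : Fin m) :
    pYUu PX PW (sysPU PX ν Q) ζ y u = ν u * ∑ x, Q u x * PW (ζ u) x y := by
  unfold pYUu
  rw [Finset.mul_sum]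
  exact Finset.sum_congr rfl fun x _ => by rw [sysPU_pUJoint hPX]

lemma sysPU_IXAu (hPX : ∀ x, PX x ≠ 0) {m : ℕ} (ν : Fin m → ℝ) (Q : Fin m → X → ℝ)
    (ζ : Fin m → A) :
    IXAu PX (sysPU PX ν Q) ζ = IofM PX (sysM ν Q ζ) := by
  unfold IXAu IofM
  refine Finset.sum_congr rfl fun x _ => Finset.sum_congr rfl fun a _ => ?_
  rw [sysPU_pXAu hPX, sysPU_pAu hPX]

lemma sysPU_IXUcond (hPX : ∀ x, PX x ≠ 0) {m : ℕ} (ν : Fin m → ℝ) (Q : Fin m → X → ℝ)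
    (ζ : Fin m → A) :
    IXUcondYAu PX PW (sysPU PX ν Q) ζ =
      ∑ u, ν u * GofM PW (sysM ν Q ζ) (Q u) (ζ u) := by
  unfold IXUcondYAu
  have swap : ∀ f : X → Y → Fin m → ℝ,
      (∑ x, ∑ y, ∑ u, f x y u) = ∑ u, ∑ x, ∑ y, f x y u := fun f =>
    (Finset.sum_congr rfl fun x _ => Finset.sum_comm).trans Finset.sum_comm
  rw [swap]
  refine Finset.sum_congr rfl fun u _ => ?_
  unfold GofM
  rw [Finset.mul_sum]
  refine Finset.sum_congr rfl fun x _ => ?_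
  rw [Finset.mul_sum]
  refine Finset.sum_congr rfl fun y _ => ?_
  rw [sysPU_pUJoint hPX, sysPU_pYAu hPX, sysPU_pXYAu hPX, sysPU_pYUu hPX]
  by_cases hv : ν u = 0
  · simp [hv]
  · set c := Q u x * PW (ζ u) x y with hc
    set S1 := ∑ x', PW (ζ u) x' y * sysM ν Q ζ x' (ζ u) with hS1
    set d := PW (ζ u) x y * sysM ν Q ζ x (ζ u) with hd
    set S2 := ∑ x', Q u x' * PW (ζ u) x' y with hS2
    have harg : ν u * c * S1 / (d * (ν u * S2)) = c * S1 / (d * S2) := by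
      rw [show ν u * c * S1 = ν u * (c * S1) by ring,
        show d * (ν u * S2) = ν u * (d * S2) by ring, mul_div_mul_left _ _ hv]
    rw [harg]
    ring


lemma inf'_const_mul [Nonempty Xh] {c : ℝ} (hc : 0 ≤ c) (f : Xh → ℝ) :
    (Finset.univ.inf' Finset.univ_nonempty fun xh : Xh => c * f xh) =
      c * Finset.univ.inf' Finset.univ_nonempty f := by
  obtain ⟨xh0, -, h0⟩ := Finset.exists_mem_eq_inf' (Finset.univ_nonempty) f
  apply le_antisymm
  · rw [h0]
    exact Finset.inf'_le _ (Finset.mem_univ xh0)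
  · exact Finset.le_inf' _ _ fun xh _ =>
      mul_le_mul_of_nonneg_left (h0 ▸ Finset.inf'_le f (Finset.mem_univ xh)) hc

lemma sysPU_expDist [Nonempty Xh] (hPX : ∀ x, PX x ≠ 0) {m : ℕ} (ν : Fin m → ℝ)
    (Q : Fin m → X → ℝ) (ζ : Fin m → A) (hν : ∀ u, 0 ≤ ν u) (dist : X → Xh → ℝ) :
    expDistU PX PW dist (sysPU PX ν Q) ζ = ∑ u, ν u * DofQ PW dist (Q u) (ζ u) := by
  unfold expDistU DofQ
  simp only [Finset.mul_sum]
  conv_lhs => rw [Finset.sum_comm]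
  refine Finset.sum_congr rfl fun u _ => Finset.sum_congr rfl fun y _ => ?_
  have he : (fun xh : Xh => ∑ x, pUJoint PX PW (sysPU PX ν Q) ζ x y u * dist x xh)
      = fun xh => ν u * ∑ x, Q u x * PW (ζ u) x y * dist x xh := by
    funext xh
    rw [Finset.mul_sum]
    exact Finset.sum_congr rfl fun x _ => by rw [sysPU_pUJoint hPX]; ring
  rw [he, inf'_const_mul (hν u)]

lemma sysM_rowsum {m : ℕ} (ν : Fin m → ℝ) (Q : Fin m → X → ℝ) (ζ : Fin m → A) (x : X) :
    ∑ a, sysM ν Q ζ x a = ∑ u, ν u * Q u x := by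
  unfold sysM
  rw [Finset.sum_comm]
  exact Finset.sum_congr rfl fun u _ => by rw [Finset.sum_ite_eq]; simp

lemma sysPU_expCost (hPX : ∀ x, PX x ≠ 0) {m : ℕ} (ν : Fin m → ℝ) (Q : Fin m → X → ℝ)
    (ζ : Fin m → A) (hQ1 : ∀ u, ∑ x, Q u x = 1) (cost : A → ℝ) :
    expCostU PX cost (sysPU PX ν Q) ζ = ∑ a, (∑ x, sysM ν Q ζ x a) * cost a := by
  unfold expCostU
  conv_lhs => rw [Finset.sum_comm]
  have step1 : ∀ u : Fin m, (∑ x, PX x * sysPU PX ν Q x u * cost (ζ u)) = ν u * cost (ζ u) := by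
    intro u
    have e : ∀ x ∈ Finset.univ, PX x * sysPU PX ν Q x u * cost (ζ u)
        = ν u * Q u x * cost (ζ u) := by
      intro x _
      unfold sysPU
      have hx := hPX x
      field_simp
    rw [Finset.sum_congr rfl e, ← Finset.sum_mul, ← Finset.mul_sum, hQ1 u, mul_one]
  rw [Finset.sum_congr rfl fun u _ => step1 u]
  have step2 : ∀ u : Fin m, ν u * cost (ζ u) = ∑ a, if ζ u = a then ν u * cost a else 0 := by
    intro u
    rw [Finset.sum_ite_eq]
    simp
  rw [Finset.sum_congr rfl fun u _ => step2 u, Finset.sum_comm]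
  refine Finset.sum_congr rfl fun a _ => ?_
  have step3 : (∑ x, sysM ν Q ζ x a) = ∑ u, if ζ u = a then ν u else 0 := by
    unfold sysM
    rw [Finset.sum_comm]
    refine Finset.sum_congr rfl fun u _ => ?_
    by_cases h : ζ u = a
    · simp only [h, if_true, ← Finset.mul_sum, hQ1 u, mul_one]
    · simp [h]
  rw [step3, Finset.sum_mul]
  refine Finset.sum_congr rfl fun u _ => ?_
  by_cases h : ζ u = a <;> simp [h]

lemma sysPU_isCondPMF (hPXpos : ∀ x, 0 < PX x) {m : ℕ} (ν : Fin m → ℝ) (Q : Fin m → X → ℝ)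
    (hν : ∀ u, 0 ≤ ν u) (hQ0 : ∀ u x, 0 ≤ Q u x) (hrow : ∀ x, ∑ u, ν u * Q u x = PX x) :
    IsCondPMF (sysPU PX ν Q) := by
  intro x
  constructor
  · intro u
    exact div_nonneg (mul_nonneg (hν u) (hQ0 u x)) (hPXpos x).le
  · unfold sysPU
    rw [← Finset.sum_div, hrow x, div_self (hPXpos x).ne']

lemma exists_sys_of_condPMF (hPXpos : ∀ x, 0 < PX x) (hPX1 : ∑ x, PX x = 1) {n : ℕ}
    (PU : X → Fin n → ℝ) (hPU : IsCondPMF PU) :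
    ∃ ν : Fin n → ℝ, ∃ Q : Fin n → X → ℝ, (∀ u, 0 ≤ ν u) ∧ (∀ u x, 0 ≤ Q u x) ∧
      (∀ u, ∑ x, Q u x = 1) ∧ (∀ x u, ν u * Q u x = PX x * PU x u) ∧
      sysPU PX ν Q = PU := by
  classical
  set ν : Fin n → ℝ := fun u => ∑ x, PX x * PU x u with hν
  set Q : Fin n → X → ℝ := fun u x => if ν u = 0 then PX x else PX x * PU x u / ν u with hQ
  have hν0 : ∀ u, 0 ≤ ν u := fun u =>
    Finset.sum_nonneg fun x _ => mul_nonneg (hPXpos x).le ((hPU x).1 u)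
  have hkey : ∀ x u, ν u * Q u x = PX x * PU x u := by
    intro x u
    by_cases h : ν u = 0
    · have hzero : PX x * PU x u = 0 := by
        have hall := (Finset.sum_eq_zero_iff_of_nonneg
          (fun x _ => mul_nonneg (hPXpos x).le ((hPU x).1 u))).mp h
        exact hall x (Finset.mem_univ x)
      rw [h, zero_mul, hzero]
    · rw [hQ]
      simp only [if_neg h]
      rw [mul_comm, div_mul_cancel₀ _ h]
  refine ⟨ν, Q, hν0, ?_, ?_, hkey, ?_⟩
  · intro u x
    rw [hQ]
    by_cases h : ν u = 0
    · simp [h, (hPXpos x).le]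
    · simp only [if_neg h]
      exact div_nonneg (mul_nonneg (hPXpos x).le ((hPU x).1 u)) (hν0 u)
  · intro u
    by_cases h : ν u = 0
    · simp only [hQ, h, if_true]
      exact hPX1
    · have : ∀ x ∈ Finset.univ, Q u x = PX x * PU x u / ν u := by
        intro x _
        rw [hQ]
        simp [h]
      rw [Finset.sum_congr rfl this, ← Finset.sum_div]
      rw [show (∑ x, PX x * PU x u) = ν u from rfl, div_self h]
  · funext x u
    have hx := (hPXpos x).ne'
    rw [show sysPU PX ν Q x u = ν u * Q u x / PX x from rfl, hkey x u, mul_comm,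
      mul_div_assoc, div_self hx, mul_one]

lemma caratheodory_weights {m : ℕ} {E : Type} [AddCommGroup E] [Module ℝ E]
    [FiniteDimensional ℝ E] (ν : Fin m → ℝ) (hν0 : ∀ u, 0 ≤ ν u) (hν1 : ∑ u, ν u = 1)
    (w : Fin m → E) :
    ∃ k : ℕ, k ≤ Module.finrank ℝ E + 1 ∧ ∃ ν' : Fin k → ℝ, ∃ φ : Fin k → Fin m,
      (∀ i, 0 ≤ ν' i) ∧ (∑ i, ν' i = 1) ∧
      (∑ i, ν' i • w (φ i)) = ∑ u, ν u • w u := by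
  classical
  have hmem : (∑ u, ν u • w u) ∈ convexHull ℝ (Set.range w) := by
    rw [← Finset.centerMass_eq_of_sum_1 Finset.univ w hν1]
    exact Finset.centerMass_mem_convexHull _ (fun i _ => hν0 i)
      (by rw [hν1]; norm_num) (fun i _ => Set.mem_range_self i)
  obtain ⟨ι, hι, z, wt, hrange, hai, hpos, hsum, hbary⟩ :=
    eq_pos_convex_span_of_mem_convexHull hmem
  letI : Fintype ι := hι
  have hcard : Fintype.card ι ≤ Module.finrank ℝ E + 1 :=
    le_trans hai.card_le_finrank_succ
      (Nat.add_le_add_right (Submodule.finrank_le _) 1)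
  let e := (Fintype.equivFin ι).symm
  have hz : ∀ i : Fin (Fintype.card ι), z (e i) ∈ Set.range w := fun i =>
    hrange (Set.mem_range_self (e i))
  refine ⟨Fintype.card ι, hcard, fun i => wt (e i),
    fun i => Classical.choose (hz i), fun i => (hpos (e i)).le, ?_, ?_⟩
  · rw [← hsum]
    exact Fintype.sum_equiv e (fun i => wt (e i)) wt fun _ => rfl
  · rw [← hbary]
    refine Fintype.sum_equiv e (fun i => wt (e i) • w (Classical.choose (hz i)))
      (fun j => wt j • z j) fun i => ?_
    rw [Classical.choose_spec (hz i)]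

lemma sysM_eq2 {m' : ℕ} (ν0 : Fin m' → ℝ) (Q0 : Fin m' → X → ℝ) (ζ0 : Fin m' → A) (x : X) (a : A) :
    sysM ν0 Q0 ζ0 x a = ∑ u, ν0 u * (if ζ0 u = a then Q0 u x else 0) := by
  unfold sysM
  exact Finset.sum_congr rfl fun u _ => by by_cases h : ζ0 u = a <;> simp [h]

lemma sysM_tot {m' : ℕ} (ν0 : Fin m' → ℝ) (Q0 : Fin m' → X → ℝ) (ζ0 : Fin m' → A)
    (h1 : ∀ u, ∑ x, Q0 u x = 1) :
    ∑ p : X × A, sysM ν0 Q0 ζ0 p.1 p.2 = ∑ u, ν0 u := by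
  rw [Fintype.sum_prod_type]
  calc ∑ x, ∑ a, sysM ν0 Q0 ζ0 x a = ∑ x, ∑ u, ν0 u * Q0 u x :=
        Finset.sum_congr rfl fun x _ => sysM_rowsum ν0 Q0 ζ0 x
    _ = ∑ u, ∑ x, ν0 u * Q0 u x := Finset.sum_comm
    _ = ∑ u, ν0 u := Finset.sum_congr rfl fun u _ => by rw [← Finset.mul_sum, h1 u, mul_one]

lemma reduce [Nonempty X] [Nonempty A] [Nonempty Xh]
    (dist : X → Xh → ℝ) (cost : A → ℝ)
    (hPXpos : ∀ x, 0 < PX x) (hPX1 : ∑ x, PX x = 1)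
    {n : ℕ} (PU : X → Fin n → ℝ) (η : Fin n → A) (hPU : IsCondPMF PU) :
    ∃ k, k ≤ Fintype.card X * Fintype.card A + 2 ∧ ∃ PU' : X → Fin k → ℝ, ∃ η' : Fin k → A,
      IsCondPMF PU' ∧ expDistU PX PW dist PU' η' = expDistU PX PW dist PU η ∧
      expCostU PX cost PU' η' = expCostU PX cost PU η ∧
      IXAu PX PU' η' + IXUcondYAu PX PW PU' η' = IXAu PX PU η + IXUcondYAu PX PW PU η := by
  classical
  have hPXne : ∀ x, PX x ≠ 0 := fun x => (hPXpos x).ne'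
  obtain ⟨ν, Q, hν0, hQ0, hQ1, hkey, hsys⟩ := exists_sys_of_condPMF hPXpos hPX1 PU hPU
  have hν1 : ∑ u, ν u = 1 := by
    have h1 : ∀ u : Fin n, ν u = ∑ x, PX x * PU x u := by
      intro u
      calc ν u = ν u * ∑ x, Q u x := by rw [hQ1 u, mul_one]
        _ = ∑ x, ν u * Q u x := Finset.mul_sum _ _ _
        _ = ∑ x, PX x * PU x u := Finset.sum_congr rfl fun x _ => hkey x u
    calc ∑ u, ν u = ∑ u, ∑ x, PX x * PU x u := Finset.sum_congr rfl fun u _ => h1 u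
      _ = ∑ x, ∑ u, PX x * PU x u := Finset.sum_comm
      _ = ∑ x, PX x := Finset.sum_congr rfl fun x _ => by
          rw [← Finset.mul_sum, (hPU x).2, mul_one]
      _ = 1 := hPX1
  set p0 : X × A := (Classical.arbitrary X, Classical.arbitrary A) with hp0
  set M := sysM ν Q η with hM
  set w : Fin n → ({p : X × A // p ≠ p0} → ℝ) × ℝ × ℝ := fun u =>
    (fun p => if η u = p.1.2 then Q u p.1.1 else 0,
      DofQ PW dist (Q u) (η u), GofM PW M (Q u) (η u)) with hw
  obtain ⟨k, hk, ν', φ, hν'0, hν'1, hbary⟩ := caratheodory_weights ν hν0 hν1 w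
  have hfr : Module.finrank ℝ (({p : X × A // p ≠ p0} → ℝ) × ℝ × ℝ)
      = Fintype.card X * Fintype.card A + 1 := by
    have hsub : Fintype.card {p : X × A // p ≠ p0} = Fintype.card (X × A) - 1 := by
      have := Fintype.card_subtype_compl (fun p : X × A => p = p0)
      rw [Fintype.card_subtype_eq] at this
      exact this
    have hpos : 1 ≤ Fintype.card (X × A) := Fintype.card_pos
    rw [Module.finrank_prod, Module.finrank_prod, Module.finrank_self, Module.finrank_pi, hsub]
    rw [Fintype.card_prod] at hsub hpos ⊢
    omega
  have hkle : k ≤ Fintype.card X * Fintype.card A + 2 := by rw [hfr] at hk; omega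
  set Q' : Fin k → X → ℝ := fun i => Q (φ i) with hQ'
  set ζ' : Fin k → A := fun i => η (φ i) with hζ'
  set M' := sysM ν' Q' ζ' with hM'
  have hb1 : ∀ p : {p : X × A // p ≠ p0},
      (∑ i, ν' i * (if ζ' i = p.1.2 then Q' i p.1.1 else 0))
        = ∑ u, ν u * (if η u = p.1.2 then Q u p.1.1 else 0) := by
    intro p
    have h := congrArg (fun v => v.1 p) hbary
    simpa only [Prod.fst_sum, Prod.smul_fst, Finset.sum_apply, Pi.smul_apply,
      smul_eq_mul, hw] using h
  have hbD : (∑ i, ν' i * DofQ PW dist (Q' i) (ζ' i))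
      = ∑ u, ν u * DofQ PW dist (Q u) (η u) := by
    have h := congrArg (fun v => v.2.1) hbary
    simpa only [Prod.snd_sum, Prod.fst_sum, Prod.smul_snd, Prod.smul_fst,
      smul_eq_mul, hw] using h
  have hbG : (∑ i, ν' i * GofM PW M (Q' i) (ζ' i))
      = ∑ u, ν u * GofM PW M (Q u) (η u) := by
    have h := congrArg (fun v => v.2.2) hbary
    simpa only [Prod.snd_sum, Prod.smul_snd, smul_eq_mul, hw] using h
  have hMall : M' = M := by
    have hne : ∀ p : X × A, p ≠ p0 → M' p.1 p.2 = M p.1 p.2 := by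
      intro p hp
      rw [hM', hM, sysM_eq2, sysM_eq2]
      exact hb1 ⟨p, hp⟩
    have hsame : ∑ p : X × A, M' p.1 p.2 = ∑ p : X × A, M p.1 p.2 := by
      rw [hM', hM, sysM_tot ν' Q' ζ' (fun i => hQ1 (φ i)), sysM_tot ν Q η hQ1, hν'1, hν1]
    have hp0eq : M' p0.1 p0.2 = M p0.1 p0.2 := by
      have h2 := Finset.add_sum_erase Finset.univ (fun p : X × A => M' p.1 p.2)
        (Finset.mem_univ p0)
      have h3 := Finset.add_sum_erase Finset.univ (fun p : X × A => M p.1 p.2)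
        (Finset.mem_univ p0)
      have h4 : ∑ p ∈ Finset.univ.erase p0, M' p.1 p.2
          = ∑ p ∈ Finset.univ.erase p0, M p.1 p.2 :=
        Finset.sum_congr rfl fun p hpmem => hne p (Finset.ne_of_mem_erase hpmem)
      linarith [h2, h3, h4, hsame]
    funext x a
    by_cases hp : (x, a) = p0
    · have h5 := hp0eq
      rw [← hp] at h5
      exact h5
    · exact hne (x, a) hp
  refine ⟨k, hkle, sysPU PX ν' Q', ζ', ?_, ?_, ?_, ?_⟩
  · apply sysPU_isCondPMF hPXpos _ _ hν'0 (fun i x => hQ0 (φ i) x)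
    intro x
    have h5 : ∑ i, ν' i * Q' i x = ∑ a, M' x a := (sysM_rowsum ν' Q' ζ' x).symm
    rw [h5, hMall, hM, sysM_rowsum]
    calc ∑ u, ν u * Q u x = ∑ u, PX x * PU x u := Finset.sum_congr rfl fun u _ => hkey x u
      _ = PX x := by rw [← Finset.mul_sum, (hPU x).2, mul_one]
  · rw [sysPU_expDist hPXne ν' Q' ζ' hν'0 dist, ← hsys, sysPU_expDist hPXne ν Q η hν0 dist]
    exact hbD
  · rw [sysPU_expCost hPXne ν' Q' ζ' (fun i => hQ1 (φ i)) cost, ← hsys,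
      sysPU_expCost hPXne ν Q η hQ1 cost]
    rw [← hM', ← hM, hMall]
  · rw [sysPU_IXAu hPXne ν' Q' ζ', sysPU_IXUcond hPXne ν' Q' ζ', ← hsys,
      sysPU_IXAu hPXne ν Q η, sysPU_IXUcond hPXne ν Q η, ← hM', ← hM, hMall, hbG]
end AuxCardBound

/-- In the single-letter minimization `min I(X;A) + I(X;U|Y,A)` subject
to `E[d(X, X̂ᵒᵖᵗ(U,Y))] ≤ D` and `E[Δ(A)] ≤ C`, restricting the auxiliary alphabet to
satisfy `|U| ≤ |X||A| + 2` does not change the minimum value. -/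
theorem cardinality_bound_auxiliary_alphabet
    {X Y A Xh : Type} [Fintype X] [Fintype Y] [Fintype A] [Fintype Xh]
    [DecidableEq X] [DecidableEq Y] [DecidableEq A] [DecidableEq Xh]
    [Nonempty X] [Nonempty Y] [Nonempty A] [Nonempty Xh]
    (PX : X → ℝ) (PW : A → X → Y → ℝ) (dist : X → Xh → ℝ) (cost : A → ℝ)
    (hPX : IsPMF PX) (hPXpos : ∀ x, 0 < PX x)
    (hPW : ∀ a x, IsPMF (PW a x))
    (hdist : ∀ x xh, 0 ≤ dist x xh) (hdist0 : ∀ x, ∃ xh, dist x xh = 0)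
    (hcost : ∀ a, 0 ≤ cost a) (hcost0 : ∃ a, cost a = 0)
    (D C : ℝ) (hD : 0 ≤ D) (hC : 0 ≤ C) :
    RDCU PX PW dist cost D C = RDCUbdd PX PW dist cost D C := by
  have hset : {r : ℝ | ∃ n : ℕ, ∃ PU : X → Fin n → ℝ, ∃ η : Fin n → A, IsCondPMF PU ∧
      expDistU PX PW dist PU η ≤ D ∧ expCostU PX cost PU η ≤ C ∧
      r = IXAu PX PU η + IXUcondYAu PX PW PU η}
      = {r : ℝ | ∃ n : ℕ, n ≤ Fintype.card X * Fintype.card A + 2 ∧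
        ∃ PU : X → Fin n → ℝ, ∃ η : Fin n → A, IsCondPMF PU ∧
        expDistU PX PW dist PU η ≤ D ∧ expCostU PX cost PU η ≤ C ∧
        r = IXAu PX PU η + IXUcondYAu PX PW PU η} := by
    ext r
    constructor
    · rintro ⟨n, PU, η, hPU, hd, hc, rfl⟩
      obtain ⟨k, hk, PU', η', h1, h2, h3, h4⟩ := reduce (PW := PW) dist cost hPXpos hPX.2 PU η hPU
      exact ⟨k, hk, PU', η', h1, by rw [h2]; exact hd, by rw [h3]; exact hc, h4.symm⟩
    · rintro ⟨n, -, PU, η, h⟩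
      exact ⟨n, PU, η, h⟩
  unfold RDCU RDCUbdd
  rw [hset]
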